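/- Let φ = (x + f(y), y) ∈ U_2 where f(y) ∈ K⟨y⟩ is not a constant (f ∉ K·1). Then the centralizer of φ in U_2 is C_{U_2}(φ) = { (x + h(y), y) : h(y) ∈ K⟨y⟩ }, i.e. it consists exactly of the unitriangular automorphisms fixing y. -/

import Mathlib

/- STATEMENT 5: for φ = (x + f(y), y) ∈ U₂ with f ∈ K⟨y⟩ non-constant (f ∉ K·1),
   the centralizer of φ in U₂ is exactly the set of unitriangular automorphisms
   fixing y (i.e. of the form (x + h(y), y)).  Here x = ι K 0, y = ι K 1. -/

noncomputable section
open FreeAlgebra Polynomial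

abbrev A2 (K : Type) [Field K] := FreeAlgebra K (Fin 2)

/-- φ is a unitriangular automorphism: x ↦ x + f(y), y ↦ y + b·1 with f ∈ K⟨y⟩, b ∈ K. -/
def IsU2 (K : Type) [Field K] (φ : A2 K ≃ₐ[K] A2 K) : Prop :=
  ∃ f ∈ Algebra.adjoin K ({ι K 1} : Set (A2 K)), ∃ b : K,
    φ (ι K 0) = ι K 0 + f ∧ φ (ι K 1) = ι K 1 + algebraMap K (A2 K) b

/-- retraction A2 → K[X], x ↦ 0, y ↦ X -/
def retr (K : Type) [Field K] : A2 K →ₐ[K] Polynomial K :=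
  FreeAlgebra.lift K (fun i => if i = 1 then Polynomial.X else 0)

lemma aevalY_inj (K : Type) [Field K] :
    Function.Injective (Polynomial.aeval (ι K 1) : Polynomial K →ₐ[K] A2 K) := by
  have h : (retr K).comp (Polynomial.aeval (ι K 1)) = AlgHom.id K (Polynomial K) := by
    apply Polynomial.algHom_ext
    simp [retr]
  intro a b hab
  have ha := DFunLike.congr_fun h a
  have hb := DFunLike.congr_fun h b
  simp only [AlgHom.coe_comp, Function.comp_apply, AlgHom.coe_id, id_eq] at ha hb
  rw [← ha, ← hb, hab]

lemma comp_add_const_eq (K : Type) [Field K] [CharZero K] (p : Polynomial K) (b : K)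
    (hcomp : p.comp (X + C b) = p) (hnc : ∀ a : K, p ≠ C a) : b = 0 := by
  by_contra hb
  have hstep : ∀ t : K, p.eval (t + b) = p.eval t := by
    intro t
    have := congrArg (Polynomial.eval t) hcomp
    simpa [Polynomial.eval_comp, add_comm] using this
  have hn : ∀ n : ℕ, p.eval (n * b) = p.eval 0 := by
    intro n
    induction n with
    | zero => simp
    | succ n ih => rw [Nat.cast_succ, add_mul, one_mul, hstep, ih]
  set g := p - C (p.eval 0) with hg
  have hgne : g ≠ 0 := by
    intro h0
    exact hnc (p.eval 0) (by rwa [sub_eq_zero] at h0)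
  have hroots : Set.Infinite { x : K | g.IsRoot x } := by
    apply Set.infinite_of_injective_forall_mem
      (f := fun n : ℕ => (n : K) * b)
      (fun m n hmn => by
        have : (m : K) = n := mul_right_cancel₀ hb hmn
        exact_mod_cast this)
      (fun n => by simp [hg, Polynomial.IsRoot, hn n])
  exact hgne (Polynomial.eq_zero_of_infinite_isRoot g hroots)

theorem centralizer_of_nonconstant (K : Type) [Field K] [CharZero K]
    (φ : A2 K ≃ₐ[K] A2 K) (f : A2 K)
    (hf : f ∈ Algebra.adjoin K ({ι K 1} : Set (A2 K)))
    (hfnc : ∀ a : K, f ≠ algebraMap K (A2 K) a)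
    (hφx : φ (ι K 0) = ι K 0 + f) (hφy : φ (ι K 1) = ι K 1) :
    ∀ ψ : A2 K ≃ₐ[K] A2 K, IsU2 K ψ →
      (ψ * φ = φ * ψ ↔ ψ (ι K 1) = ι K 1) := by
  intro ψ ⟨h, hh, b, hψx, hψy⟩
  rw [Algebra.adjoin_singleton_eq_range_aeval, AlgHom.mem_range] at hf hh
  obtain ⟨p, hp⟩ := hf
  obtain ⟨q, hq⟩ := hh
  -- φ fixes anything in K⟨y⟩
  have hφfix : ∀ r : Polynomial K, φ (Polynomial.aeval (ι K 1) r) = Polynomial.aeval (ι K 1) r := by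
    intro r
    have := Polynomial.aeval_algHom_apply (φ : A2 K →ₐ[K] A2 K) (ι K 1) r
    change Polynomial.aeval (φ (ι K 1)) r = φ (Polynomial.aeval (ι K 1) r) at this
    rw [← this, hφy]
  have hψf : ψ f = Polynomial.aeval (ι K 1) (p.comp (X + C b)) := by
    have := Polynomial.aeval_algHom_apply (ψ : A2 K →ₐ[K] A2 K) (ι K 1) p
    change Polynomial.aeval (ψ (ι K 1)) p = ψ (Polynomial.aeval (ι K 1) p) at this
    rw [← hp, ← this, Polynomial.aeval_comp]
    simp [hψy]
  constructor
  · intro hcomm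
    have hx := DFunLike.congr_fun hcomm (ι K 0)
    rw [AlgEquiv.mul_apply, AlgEquiv.mul_apply, hφx, hψx, map_add, map_add, hψx,
      hφx, ← hq, hφfix q, hq] at hx
    -- hx : ι 0 + h + ψ f = ι 0 + f + h
    have hψff : ψ f = f := by
      have := hx
      abel_nf at this
      -- fallback
      linear_combination (norm := abel_nf) this
    rw [hψf, ← hp] at hψff
    have hpc : p.comp (X + C b) = p := aevalY_inj K hψff
    have hb : b = 0 := by
      apply comp_add_const_eq K p b hpc
      intro a hpa
      exact hfnc a (by rw [← hp, hpa]; simp [Polynomial.algebraMap_eq])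
    rw [hψy, hb]
    simp
  · intro hy
    have hψfix : ∀ r : Polynomial K, ψ (Polynomial.aeval (ι K 1) r) = Polynomial.aeval (ι K 1) r := by
      intro r
      have := Polynomial.aeval_algHom_apply (ψ : A2 K →ₐ[K] A2 K) (ι K 1) r
      change Polynomial.aeval (ψ (ι K 1)) r = ψ (Polynomial.aeval (ι K 1) r) at this
      rw [← this, hy]
    apply AlgEquiv.ext
    have : (ψ * φ : A2 K ≃ₐ[K] A2 K).toAlgHom = (φ * ψ : A2 K ≃ₐ[K] A2 K).toAlgHom := by
      apply FreeAlgebra.hom_ext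
      funext i
      fin_cases i
      · simp only [Function.comp_apply, AlgEquiv.toAlgHom_eq_coe, AlgHom.coe_coe,
          AlgEquiv.mul_apply]
        show ψ (φ (ι K 0)) = φ (ψ (ι K 0))
        rw [hφx, hψx, map_add, map_add, hψx, hφx, ← hp, hψfix p, hp, ← hq, hφfix q, hq]
        abel
      · simp only [Function.comp_apply, AlgEquiv.toAlgHom_eq_coe, AlgHom.coe_coe,
          AlgEquiv.mul_apply]
        show ψ (φ (ι K 1)) = φ (ψ (ι K 1))
        rw [hφy, hy, hφy]
    intro a
    exact DFunLike.congr_fun this a
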